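/- On the infinite d-regular tree T (d ≥ 3) with origin o, if all rotors initially point in direction d − 1, then every chip in an infinite succession of chips started at o eventually returns to o. That is, with this initial rotor configuration, rotor-router walk is recurrent: no chip ever escapes to infinity. -/
import Mathlib


/-!
The infinite `d`-regular tree with rotor-router walk.

Vertices are encoded as `Option (Fin d × List (Fin (d - 1)))`: `none` is the
origin `o`, and `some (b, w)` is the vertex of the `b`-th principal branch
reached from the root of that branch by the path `w` (so `|some (b, w)| =
w.length + 1`).

Every vertex carries a rotor with `d` directions indexed by `ZMod d`, cycling
in increasing order.  At the origin the value `v` points to the root of the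
`(v+1)`-st principal branch (directions `1, …, d` are indexed by values
`0, …, d - 1`).  At a non-origin vertex, a value `v < d - 1` points to the
child obtained by appending `v`, and the value `d - 1` (direction `d`) points
to the parent.  A rotor-router step first increments the rotor at the chip's
location, then moves the chip in the new direction.
-/

/-- Vertices of the infinite `d`-regular tree. -/
abbrev TV (d : ℕ) := Option (Fin d × List (Fin (d - 1)))

/-- Rotor configurations on the infinite `d`-regular tree. -/
abbrev TConf (d : ℕ) := TV d → ZMod d

/-- One rotor-router step: increment the rotor at the chip's location, then
move the chip in the new direction. -/
def tstep (d : ℕ) (p : TConf d × TV d) : TConf d × TV d :=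
  match p with
  | (C, none) =>
    let r := C none + 1
    let C' := Function.update C none r
    if h : r.val < d then (C', some (⟨r.val, h⟩, [])) else (C', none)
  | (C, some (b, w)) =>
    let r := C (some (b, w)) + 1
    let C' := Function.update C (some (b, w)) r
    if h : r.val < d - 1 then (C', some (b, w ++ [⟨r.val, h⟩]))
    else (C', if w = [] then none else some (b, w.dropLast))

/-- The number of edges in the path from the origin to a vertex. -/
def depth (d : ℕ) : TV d → ℕ
  | none => 0
  | some (_, w) => w.length + 1

/-- The same step, but absorbing at the origin: used to track a chip from the
moment it has left the origin until it possibly returns there. -/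
def tstepAbs (d : ℕ) (p : TConf d × TV d) : TConf d × TV d :=
  if p.2 = none then p else tstep d p

/-- The trajectory of a single chip started at the origin with rotor
configuration `C`: `traj d C k` is the state after `k + 1` rotor-router
steps, the walk being stopped (absorbed) if the chip returns to the origin. -/
def traj (d : ℕ) (C : TConf d) (k : ℕ) : TConf d × TV d :=
  (tstepAbs d)^[k] (tstep d (C, none))

/-- The chip started at the origin eventually returns to the origin
(otherwise it escapes to infinity, visiting each vertex finitely often). -/
def chipReturns (d : ℕ) (C : TConf d) : Prop := ∃ k, (traj d C k).2 = none

/-- The rotor configuration left behind by a chip started at the origin: the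
rotor at each vertex takes its eventual value along the trajectory (if the
chip returns this is the configuration upon return; if the chip escapes to
infinity it visits each vertex only finitely often, so each rotor is
eventually constant and the configuration is well-defined). -/
noncomputable def nextConf (d : ℕ) (C : TConf d) : TConf d := fun v =>
  haveI := Classical.dec (∃ c : ZMod d, ∃ K : ℕ, ∀ k, K ≤ k → (traj d C k).1 v = c)
  if h : ∃ c : ZMod d, ∃ K : ℕ, ∀ k, K ≤ k → (traj d C k).1 v = c then h.choose
  else C v

/-- The rotor configuration seen by the `(j+1)`-st chip, when chips are
started at the origin one at a time, beginning from the configuration `C0`. -/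
noncomputable def confSeq (d : ℕ) (C0 : TConf d) : ℕ → TConf d
  | 0 => C0
  | j + 1 => nextConf d (confSeq d C0 j)

/-- The `(j+1)`-st chip (`j = 0, 1, 2, …`) escapes to infinity. -/
def escapes (d : ℕ) (C0 : TConf d) (j : ℕ) : Prop :=
  ¬ chipReturns d (confSeq d C0 j)

namespace Rotor13

/-- Rotor value at relative depth `k` of a subtree in state `m`. -/
def st (d m k : ℕ) : ZMod d := if k < m then -1 else ((d-2 : ℕ) : ZMod d)

variable {d : ℕ}

lemma d2_add_one (hd : 3 ≤ d) : ((d-2:ℕ):ZMod d) + 1 = ((d-1:ℕ):ZMod d) := by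
  rw [show d - 1 = (d-2) + 1 by omega]; push_cast; ring

lemma val_dm1 (hd : 3 ≤ d) : (((d-1:ℕ):ZMod d)).val = d - 1 := by
  haveI : NeZero d := ⟨by omega⟩
  exact ZMod.val_cast_of_lt (by omega)

lemma neg_one_eq (hd : 3 ≤ d) : ((d-1:ℕ):ZMod d) = -1 := by
  haveI : NeZero d := ⟨by omega⟩
  have h : ((d-1:ℕ):ZMod d) + 1 = 0 := by
    rw [show (1:ZMod d) = ((1:ℕ):ZMod d) by push_cast; ring, ← Nat.cast_add,
      show d - 1 + 1 = d by omega, ZMod.natCast_self]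
  linear_combination h

lemma d2_eq (hd : 3 ≤ d) : ((d-2:ℕ):ZMod d) = -1 - 1 := by
  have := d2_add_one hd
  rw [neg_one_eq hd] at this
  linear_combination this

/-- Exit step: from a vertex whose rotor is `d-2`, the chip moves to the parent. -/
lemma step_exit (hd : 3 ≤ d) (C : TConf d) (b : Fin d) (w : List (Fin (d-1)))
    (hC : C (some (b,w)) = ((d-2:ℕ):ZMod d)) :
    tstepAbs d (C, some (b,w)) = (Function.update C (some (b,w)) (-1),
      if w = [] then none else some (b, w.dropLast)) := by
  have hr : C (some (b,w)) + 1 = ((d-1:ℕ):ZMod d) := by rw [hC, d2_add_one hd]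
  have hv : ¬ (C (some (b,w)) + 1).val < d - 1 := by rw [hr, val_dm1 hd]; omega
  have h1 : tstepAbs d (C, some (b,w)) = tstep d (C, some (b,w)) := by simp [tstepAbs]
  rw [h1]
  show (if h : (C (some (b,w)) + 1).val < d - 1 then _ else _) = _
  rw [dif_neg hv, hr, neg_one_eq hd]

/-- Child step: if incrementing the rotor yields a value `c < d-1`, the chip
moves to the `c`-th child. -/
lemma step_child (hd : 3 ≤ d) (C : TConf d) (b : Fin d) (w : List (Fin (d-1)))
    (c : ℕ) (hc : c < d - 1) (hC : C (some (b,w)) + 1 = ((c:ℕ) : ZMod d)) :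
    tstepAbs d (C, some (b,w)) = (Function.update C (some (b,w)) ((c:ℕ):ZMod d),
      some (b, w ++ [⟨c, hc⟩])) := by
  haveI : NeZero d := ⟨by omega⟩
  have hv : (((c:ℕ)):ZMod d).val = c := ZMod.val_cast_of_lt (by omega)
  have h : (C (some (b,w)) + 1).val < d - 1 := by rw [hC, hv]; exact hc
  have h1 : tstepAbs d (C, some (b,w)) = tstep d (C, some (b,w)) := by simp [tstepAbs]
  rw [h1]
  show (if h : (C (some (b,w)) + 1).val < d - 1 then _ else _) = _
  rw [dif_pos h]
  simp only [hC, hv]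


lemma st_lt {m k : ℕ} (h : k < m) : st d m k = -1 := if_pos h
lemma st_ge {m k : ℕ} (h : ¬ k < m) : st d m k = ((d-2:ℕ):ZMod d) := if_neg h

lemma st_shift {m k : ℕ} (hk : 1 ≤ k) : st d (m+1) k = st d m (k-1) := by
  unfold st; by_cases h : k < m + 1
  · rw [if_pos h, if_pos (by omega)]
  · rw [if_neg h, if_neg (by omega)]

/-- A proper extension of `w` extends `w ++ [c]` for some `c`. -/
lemma proper_ext {w w' : List (Fin (d-1))} (h : w <+: w') (hne : w' ≠ w) :
    ∃ c : Fin (d-1), (w ++ [c]) <+: w' := by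
  obtain ⟨u, rfl⟩ := h
  cases u with
  | nil => simp at hne
  | cons c u' => exact ⟨c, u', by simp⟩

lemma sibling_eq {w w' : List (Fin (d-1))} {c c' : Fin (d-1)}
    (h : (w ++ [c]) <+: w') (h' : (w ++ [c']) <+: w') : c = c' := by
  obtain ⟨u, rfl⟩ := h
  obtain ⟨u', hu⟩ := h'
  rw [List.append_assoc, List.append_assoc] at hu
  have := List.append_cancel_left hu
  exact ((by simpa using this.symm : c = c' ∧ u = u')).1

lemma len_ext {w w' : List (Fin (d-1))} {c : Fin (d-1)} (h : (w ++ [c]) <+: w') :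
    w.length + 1 ≤ w'.length := by
  have := h.length_le; simpa using this

lemma ne_of_ext {b : Fin d} {w w' : List (Fin (d-1))} {c : Fin (d-1)}
    (h : (w ++ [c]) <+: w') : (some (b, w') : TV d) ≠ some (b, w) := by
  have := len_ext h
  intro he
  have hww : w' = w := by simpa using he
  subst hww; omega

/-- `ExcP d m`: an excursion into a subtree in state `m` terminates at the
parent, leaving the subtree in state `m+1` and everything else unchanged. -/
def ExcP (d m : ℕ) : Prop := ∀ (C : TConf d) (b : Fin d) (w : List (Fin (d-1))),
  (∀ w', w <+: w' → C (some (b, w')) = st d m (w'.length - w.length)) →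
  ∃ n C', (tstepAbs d)^[n+1] (C, some (b, w)) =
      (C', if w = [] then none else some (b, w.dropLast))
    ∧ (∀ w', w <+: w' → C' (some (b, w')) = st d (m+1) (w'.length - w.length))
    ∧ (∀ v : TV d, (∀ w', w <+: w' → v ≠ some (b, w')) → C' v = C v)

/-- Loop lemma: a chip at a vertex whose rotor is `d-2-t` (i.e. with `t`
children left to visit), whose first `d-1-t` child subtrees are already in
state `m+1` and whose remaining child subtrees are in state `m`, visits the
remaining `t` children (one excursion each) and then exits to the parent,
leaving the whole subtree in state `m+2`. -/
lemma loop_lemma (hd : 3 ≤ d) (m : ℕ) (IH : ExcP d m) :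
    ∀ t, t ≤ d - 1 → ∀ (C : TConf d) (b : Fin d) (w : List (Fin (d-1))),
      C (some (b,w)) = ((d-2:ℕ):ZMod d) - (t:ℕ) →
      (∀ (c : Fin (d-1)) (w' : List (Fin (d-1))), (w ++ [c]) <+: w' →
        C (some (b,w')) = st d (if (c:ℕ) < d-1-t then m+1 else m)
          (w'.length - (w.length+1))) →
      ∃ n C', (tstepAbs d)^[n+1] (C, some (b,w)) =
          (C', if w = [] then none else some (b, w.dropLast))
        ∧ (∀ w', w <+: w' → C' (some (b,w')) = st d (m+2) (w'.length - w.length))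
        ∧ (∀ v : TV d, (∀ w', w <+: w' → v ≠ some (b,w')) → C' v = C v) := by
  intro t
  induction t with
  | zero =>
    intro _ C b w hroot hch
    refine ⟨0, Function.update C (some (b,w)) (-1), ?_, ?_, ?_⟩
    · show tstepAbs d (C, some (b,w)) = _
      exact step_exit hd C b w (by rw [hroot]; push_cast; ring)
    · intro w' hw'
      rcases eq_or_ne w' w with rfl | hne
      · rw [Function.update_self, Nat.sub_self, st_lt (by omega)]
      · obtain ⟨c, hc⟩ := proper_ext hw' hne
        rw [Function.update_of_ne (ne_of_ext hc), hch c w' hc,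
          if_pos (by omega : (c:ℕ) < d-1-0)]
        have h1 := len_ext hc
        rw [st_shift (by omega : 1 ≤ w'.length - w.length)]
        congr 1 <;> omega
    · intro v hv
      exact Function.update_of_ne (hv w List.prefix_rfl) _ C
  | succ t ih =>
    intro ht C b w hroot hch
    have ht' : t ≤ d - 1 := by omega
    have htd : t ≤ d - 2 := by omega
    set c0 : ℕ := d - 2 - t with hc0def
    have hc0 : c0 < d - 1 := by omega
    have hcast : ((c0:ℕ):ZMod d) = ((d-2:ℕ):ZMod d) - ((t:ℕ):ZMod d) := by
      rw [hc0def, Nat.cast_sub htd]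
    have hr : C (some (b,w)) + 1 = ((c0:ℕ):ZMod d) := by
      rw [hroot, hcast]; push_cast; ring
    have hstep1 := step_child hd C b w c0 hc0 hr
    set c0f : Fin (d-1) := ⟨c0, hc0⟩ with hc0f
    set C1 := Function.update C (some (b,w)) ((c0:ℕ):ZMod d) with hC1
    -- the excursion into child `c0`
    have hsub : ∀ w', (w ++ [c0f]) <+: w' →
        C1 (some (b,w')) = st d m (w'.length - (w ++ [c0f]).length) := by
      intro w' hw'
      rw [hC1, Function.update_of_ne (ne_of_ext hw')]
      rw [hch c0f w' hw', if_neg (by simp [hc0f]; omega)]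
      congr 1; simp
    obtain ⟨n1, C2, hit2, hC2sub, hC2off⟩ := IH C1 b (w ++ [c0f]) hsub
    have hpos2 : (if (w ++ [c0f]) = [] then (none : TV d)
        else some (b, (w ++ [c0f]).dropLast)) = some (b, w) := by simp
    rw [hpos2] at hit2
    -- remaining loop
    have hroot2 : C2 (some (b,w)) = ((d-2:ℕ):ZMod d) - ((t:ℕ):ZMod d) := by
      rw [hC2off _ (fun w'' hw'' => (ne_of_ext hw'').symm), hC1,
        Function.update_self, hcast]
    have hch2 : ∀ (c : Fin (d-1)) (w' : List (Fin (d-1))), (w ++ [c]) <+: w' →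
        C2 (some (b,w')) = st d (if (c:ℕ) < d-1-t then m+1 else m)
          (w'.length - (w.length+1)) := by
      intro c w' hw'
      by_cases hc : c = c0f
      · subst hc
        rw [if_pos (by simp [hc0f]; omega)]
        have := hC2sub w' hw'
        rw [this]; congr 1; simp
      · have hoff : ∀ w'', (w ++ [c0f]) <+: w'' → (some (b,w') : TV d) ≠ some (b,w'') := by
          intro w'' hw'' he
          have : w' = w'' := by simpa using he
          subst this
          exact hc (sibling_eq hw' hw'')
        rw [hC2off _ hoff, hC1, Function.update_of_ne (ne_of_ext hw'), hch c w' hw']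
        have hcv : (c:ℕ) ≠ c0 := fun h => hc (Fin.ext h)
        congr 1
        by_cases h1 : (c:ℕ) < d-1-t
        · rw [if_pos h1, if_pos (by omega)]
        · rw [if_neg h1, if_neg (by omega)]
    obtain ⟨n2, C3, hit3, hC3sub, hC3off⟩ := ih ht' C2 b w hroot2 hch2
    refine ⟨n2 + n1 + 2, C3, ?_, hC3sub, ?_⟩
    · rw [show n2 + n1 + 2 + 1 = (n2+1) + ((n1+1) + 1) by ring,
        Function.iterate_add_apply (tstepAbs d) (n2+1) ((n1+1)+1),
        Function.iterate_add_apply (tstepAbs d) (n1+1) 1,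
        Function.iterate_one, hstep1, hit2, hit3]
    · intro v hv
      rw [hC3off v hv,
        hC2off v (fun w'' hw'' => hv w'' ((List.prefix_append w [c0f]).trans hw'')),
        hC1, Function.update_of_ne (hv w List.prefix_rfl)]

/-- Excursions terminate, advancing the subtree state by one. -/
lemma exc (hd : 3 ≤ d) : ∀ m, ExcP d m := by
  intro m
  induction m with
  | zero =>
    intro C b w hC
    refine ⟨0, Function.update C (some (b,w)) (-1), ?_, ?_, ?_⟩
    · show tstepAbs d (C, some (b,w)) = _
      refine step_exit hd C b w ?_
      rw [hC w List.prefix_rfl, st_ge (by omega)]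
    · intro w' hw'
      rcases eq_or_ne w' w with rfl | hne
      · rw [Function.update_self, Nat.sub_self, st_lt (by omega)]
      · obtain ⟨c, hc⟩ := proper_ext hw' hne
        have h1 := len_ext hc
        rw [Function.update_of_ne (ne_of_ext hc), hC w' hw', st_ge (by omega),
          st_ge (by omega)]
    · intro v hv
      exact Function.update_of_ne (hv w List.prefix_rfl) _ C
  | succ m ihm =>
    intro C b w hC
    refine loop_lemma hd m ihm (d-1) le_rfl C b w ?_ ?_
    · rw [hC w List.prefix_rfl, Nat.sub_self, st_lt (by omega), neg_one_eq hd,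
        d2_eq hd]
      ring
    · intro c w' hw'
      have h1 := len_ext hw'
      rw [if_neg (by omega), hC w' ((List.prefix_append w [c]).trans hw'),
        st_shift (by omega : 1 ≤ w'.length - w.length)]
      congr 1 <;> omega

/-- One chip started at the origin, on a configuration whose branches are in
states `m b`: it returns, and leaves one branch state advanced by one. -/
lemma chip (hd : 3 ≤ d) (C : TConf d) (m : Fin d → ℕ)
    (hC : ∀ (b : Fin d) (w : List (Fin (d-1))), C (some (b,w)) = st d (m b) w.length) :
    chipReturns d C ∧
      ∃ m' : Fin d → ℕ, ∀ (b : Fin d) (w : List (Fin (d-1))),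
        nextConf d C (some (b,w)) = st d (m' b) w.length := by
  haveI : NeZero d := ⟨by omega⟩
  set r := C none + 1 with hrdef
  have hrv : r.val < d := ZMod.val_lt r
  set b0 : Fin d := ⟨r.val, hrv⟩ with hb0
  set C1 := Function.update C none r with hC1
  have hstep0 : tstep d (C, none) = (C1, some (b0, [])) := by
    simp only [tstep]
    rw [dif_pos hrv]
  have hsub : ∀ w', ([] : List (Fin (d-1))) <+: w' →
      C1 (some (b0, w')) = st d (m b0) (w'.length - ([] : List (Fin (d-1))).length) := by
    intro w' _
    rw [hC1, Function.update_of_ne (by simp), hC b0 w']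
    simp
  obtain ⟨n, C', hit, hsubf, hoff⟩ := exc hd (m b0) C1 b0 [] hsub
  simp at hit
  have htraj : traj d C (n+1) = (C', none) := by
    show (tstepAbs d)^[n+1] (tstep d (C, none)) = _
    rw [hstep0, Function.iterate_succ_apply]
    exact hit
  have hfix : ∀ t, (tstepAbs d)^[t] ((C', none) : TConf d × TV d) = (C', none) := by
    intro t
    induction t with
    | zero => rfl
    | succ t iht => rw [Function.iterate_succ_apply, show tstepAbs d (C', none) = (C', none) from by simp [tstepAbs], iht]
  have hconst : ∀ k, n+1 ≤ k → traj d C k = (C', none) := by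
    intro k hk
    obtain ⟨t, rfl⟩ : ∃ t, k = t + (n+1) := ⟨k - (n+1), by omega⟩
    show (tstepAbs d)^[t + (n+1)] (tstep d (C, none)) = _
    rw [Function.iterate_add_apply, show (tstepAbs d)^[n+1] (tstep d (C, none)) = (C', none) from htraj, hfix]
  have hnext : ∀ v, nextConf d C v = C' v := by
    intro v
    have hex : ∃ c : ZMod d, ∃ K : ℕ, ∀ k, K ≤ k → (traj d C k).1 v = c :=
      ⟨C' v, n+1, fun k hk => by rw [hconst k hk]⟩
    unfold nextConf
    rw [dif_pos hex]
    obtain ⟨K, hK⟩ := hex.choose_spec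
    have h1 := hK (max K (n+1)) (le_max_left _ _)
    rw [hconst _ (le_max_right _ _)] at h1
    exact h1.symm
  constructor
  · exact ⟨n+1, by rw [htraj]⟩
  · refine ⟨Function.update m b0 (m b0 + 1), ?_⟩
    intro b w
    rw [hnext]
    by_cases hb : b = b0
    · subst hb
      rw [hsubf w List.nil_prefix, Function.update_self]
      simp
    · rw [hoff _ (fun w' _ => by simp [hb]), hC1,
        Function.update_of_ne (by simp), hC,
        Function.update_of_ne hb]

end Rotor13

/-- On the infinite `d`-regular tree (`d ≥ 3`), if all rotors initially point
in direction `d − 1` (encoded by `d - 2 : ZMod d`), then every chip in an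
infinite succession of chips started at the origin eventually returns to the
origin: rotor-router walk is recurrent. -/


theorem stmt13 (d : ℕ) (hd : 3 ≤ d) :
    ∀ j : ℕ, chipReturns d (confSeq d (fun _ => ((d - 2 : ℕ) : ZMod d)) j) := by
  have key : ∀ j, ∃ m : Fin d → ℕ, ∀ (b : Fin d) (w : List (Fin (d-1))),
      confSeq d (fun _ => ((d - 2 : ℕ) : ZMod d)) j (some (b,w)) = Rotor13.st d (m b) w.length := by
    intro j
    induction j with
    | zero => exact ⟨fun _ => 0, fun b w => by simp [confSeq, Rotor13.st]⟩
    | succ j ih =>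
      obtain ⟨m, hm⟩ := ih
      have h2 := (Rotor13.chip hd _ m hm).2
      simpa only [confSeq] using h2
  intro j
  obtain ⟨m, hm⟩ := key j
  exact (Rotor13.chip hd _ m hm).1
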